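/- Theorem 4: Assume (A1)–(A3) and (A7). Then θ_psw^(m) = θ_sw^(m). -/

import Mathlib

open MeasureTheory Finset
open scoped Classical

namespace MSMPaper

noncomputable section

variable {Ω : Type*} [MeasurableSpace Ω] {𝓛 : Type*}

/-- Conditional probability `P(E | F) = P(E ∩ F) / P(F)` as a real number
(junk value `0` when `P F = 0`). -/
def cP (P : Measure Ω) (E F : Set Ω) : ℝ := (P (E ∩ F)).toReal / (P F).toReal

variable {K : ℕ}

/-- Event `Ā(t−1) = b̄` (treatment history up to, not including, time `t`). -/
def Apast (A : Fin K → Ω → Bool) (t : ℕ) (b : Fin K → Bool) : Set Ω :=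
  {ω | ∀ k : Fin K, (k : ℕ) < t → A k ω = b k}

/-- Event `L̄(t) = l̄` (covariate history up to and including time `t`). -/
def Lpast (L : Fin K → Ω → 𝓛) (t : ℕ) (l : Fin K → 𝓛) : Set Ω :=
  {ω | ∀ k : Fin K, (k : ℕ) ≤ t → L k ω = l k}

/-- Event `A̲(s, t−1) = b` (treatment history from time `s` up to, not including, `t`). -/
def Aseg (A : Fin K → Ω → Bool) (s t : ℕ) (b : Fin K → Bool) : Set Ω :=
  {ω | ∀ k : Fin K, s ≤ (k : ℕ) → (k : ℕ) < t → A k ω = b k}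

/-- Event `A̲(K−m) = a̲` for a (last-`m`) treatment vector `as`. -/
def EtrV (A : Fin K → Ω → Bool) (m : ℕ) (as : Fin K → Bool) : Set Ω :=
  {ω | ∀ k : Fin K, K - m ≤ (k : ℕ) → A k ω = as k}

/-- Event `A̲(K−m) = a_m` (constant `a` on the last `m` coordinates). -/
def Etr (A : Fin K → Ω → Bool) (m : ℕ) (a : Bool) : Set Ω :=
  EtrV A m (fun _ => a)

/-- Stabilized weights `W_sw`. -/
def Wsw (P : Measure Ω) (A : Fin K → Ω → Bool) (L : Fin K → Ω → 𝓛) : Ω → ℝ :=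
  fun ω => ∏ k : Fin K,
    cP P {ω' | A k ω' = A k ω} (Apast A (k : ℕ) (fun j => A j ω)) /
      cP P {ω' | A k ω' = A k ω}
        (Lpast L (k : ℕ) (fun j => L j ω) ∩ Apast A (k : ℕ) (fun j => A j ω))

/-- Restricted stabilized weights `W_rsw^(m)`. -/
def Wrsw (P : Measure Ω) (A : Fin K → Ω → Bool) (L : Fin K → Ω → 𝓛) (m : ℕ) : Ω → ℝ :=
  fun ω => ∏ k ∈ Finset.univ.filter (fun k : Fin K => K - m ≤ (k : ℕ)),
    cP P {ω' | A k ω' = A k ω} (Aseg A (K - m) (k : ℕ) (fun j => A j ω)) /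
      cP P {ω' | A k ω' = A k ω}
        (Lpast L (k : ℕ) (fun j => L j ω) ∩ Apast A (k : ℕ) (fun j => A j ω))

/-- Partial stabilized weights `W_psw^(m)`. -/
def Wpsw (P : Measure Ω) (A : Fin K → Ω → Bool) (L : Fin K → Ω → 𝓛) (m : ℕ) : Ω → ℝ :=
  fun ω => ∏ k ∈ Finset.univ.filter (fun k : Fin K => K - m ≤ (k : ℕ)),
    cP P {ω' | A k ω' = A k ω} (Apast A (k : ℕ) (fun j => A j ω)) /
      cP P {ω' | A k ω' = A k ω}
        (Lpast L (k : ℕ) (fun j => L j ω) ∩ Apast A (k : ℕ) (fun j => A j ω))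

/-- IP-weighted contrast `θ_W^(m)`. -/
def θW (P : Measure Ω) (A : Fin K → Ω → Bool) (m : ℕ) (W Y : Ω → ℝ) : ℝ :=
  (∫ ω in Etr A m true, W ω * Y ω ∂P) / (∫ ω in Etr A m true, W ω ∂P) -
    (∫ ω in Etr A m false, W ω * Y ω ∂P) / (∫ ω in Etr A m false, W ω ∂P)

/-- `rev j` is the time index `K − 1 − j`; the paper's coefficient `ψ_{j+1}`
multiplies `a(K − (j+1)) = a(rev j)`. -/
def rev (j : Fin K) : Fin K := ⟨K - 1 - (j : ℕ), by have := j.isLt; omega⟩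

/-- `θ^(K) = 𝔼[Y^{1_K}] − 𝔼[Y^{0_K}]`. -/
def θKfull (P : Measure Ω) (Ypot : (Fin K → Bool) → Ω → ℝ) : ℝ :=
  (∫ ω, Ypot (fun _ => true) ω ∂P) - ∫ ω, Ypot (fun _ => false) ω ∂P

/-- (A1) consistency. -/
def A1ok (A : Fin K → Ω → Bool) (Y : Ω → ℝ) (Ypot : (Fin K → Bool) → Ω → ℝ) : Prop :=
  ∀ (a : Fin K → Bool) (ω : Ω), (∀ k, A k ω = a k) → Y ω = Ypot a ω

/-- (A2) sequential exchangeability. -/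
def A2ok (P : Measure Ω) (A : Fin K → Ω → Bool) (L : Fin K → Ω → 𝓛)
    (Ypot : (Fin K → Bool) → Ω → ℝ) : Prop :=
  ∀ (t : Fin K) (a : Fin K → Bool) (B : Set ℝ), MeasurableSet B →
    ∀ (av : Bool) (l : Fin K → 𝓛) (b : Fin K → Bool),
      0 < P (Lpast L (t : ℕ) l ∩ Apast A (t : ℕ) b) →
      cP P ({ω | Ypot a ω ∈ B} ∩ {ω | A t ω = av}) (Lpast L (t : ℕ) l ∩ Apast A (t : ℕ) b) =
        cP P {ω | Ypot a ω ∈ B} (Lpast L (t : ℕ) l ∩ Apast A (t : ℕ) b) *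
          cP P {ω | A t ω = av} (Lpast L (t : ℕ) l ∩ Apast A (t : ℕ) b)

/-- (A3) positivity. -/
def A3ok (P : Measure Ω) (A : Fin K → Ω → Bool) (L : Fin K → Ω → 𝓛) : Prop :=
  ∀ (t : Fin K) (av : Bool) (l : Fin K → 𝓛) (b : Fin K → Bool),
    0 < P (Lpast L (t : ℕ) l ∩ Apast A (t : ℕ) b) →
    0 < cP P {ω | A t ω = av} (Lpast L (t : ℕ) l ∩ Apast A (t : ℕ) b)

/-- The marginal structural model `𝔼[Y^{ā}] = ψ₀ + Σ_{j=1}^K ψ_j a(K−j)`;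
here `ψ j` is the paper's `ψ_{j+1}`, the coefficient of `a(K−1−j)`. -/
def MSMeq (P : Measure Ω) (Ypot : (Fin K → Bool) → Ω → ℝ) (ψ0 : ℝ) (ψ : Fin K → ℝ) : Prop :=
  ∀ a : Fin K → Bool,
    (∫ ω, Ypot a ω ∂P) = ψ0 + ∑ j : Fin K, ψ j * (if a (rev j) = true then 1 else 0)

/-- (A5) conditional MSM given the past treatment history `Ā(K−m−1)`. -/
def A5ok (P : Measure Ω) (A : Fin K → Ω → Bool) (Ypot : (Fin K → Bool) → Ω → ℝ)
    (m : ℕ) : Prop :=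
  ∀ b : Fin K → Bool, 0 < P (Apast A (K - m) b) →
    ∃ (φ0 : ℝ) (φ : Fin K → ℝ), ∀ a : Fin K → Bool,
      (∫ ω in Apast A (K - m) b, Ypot a ω ∂P) / (P (Apast A (K - m) b)).toReal =
        φ0 + ∑ j : Fin K, φ j * (if a (rev j) = true then 1 else 0)

/-- `q_{j+1} = P(A(K−1−j)=1 | A̲(K−m)=1_m) − P(A(K−1−j)=1 | A̲(K−m)=0_m)`. -/
def qcoef (P : Measure Ω) (A : Fin K → Ω → Bool) (m : ℕ) (j : Fin K) : ℝ :=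
  cP P {ω | A (rev j) ω = true} (Etr A m true) -
    cP P {ω | A (rev j) ω = true} (Etr A m false)

end

noncomputable section Aux
set_option linter.unusedSectionVars false

variable {Ω : Type*} [MeasurableSpace Ω] {𝓛 : Type*} [MeasurableSpace 𝓛]
  [Fintype 𝓛] [Nonempty 𝓛] [MeasurableSingletonClass 𝓛]
variable {K : ℕ}

/-! ### Basic measurability and set lemmas -/

lemma mset_Aeq {A : Fin K → Ω → Bool} (hA : ∀ k, Measurable (A k)) (k : Fin K) (v : Bool) :
    MeasurableSet {ω | A k ω = v} :=
  hA k (measurableSet_singleton v)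

lemma mset_Apast {A : Fin K → Ω → Bool} (hA : ∀ k, Measurable (A k)) (t : ℕ)
    (b : Fin K → Bool) : MeasurableSet (Apast A t b) := by
  have h : Apast A t b = ⋂ k : Fin K, {ω | (k : ℕ) < t → A k ω = b k} := by
    ext ω; simp [Apast, Set.mem_iInter]
  rw [h]
  refine MeasurableSet.iInter fun k => ?_
  by_cases hk : (k : ℕ) < t
  · have : {ω : Ω | (k : ℕ) < t → A k ω = b k} = A k ⁻¹' {b k} := by ext ω; simp [hk]
    rw [this]; exact hA k (measurableSet_singleton _)
  · have : {ω : Ω | (k : ℕ) < t → A k ω = b k} = Set.univ := by ext ω; simp [hk]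
    rw [this]; exact MeasurableSet.univ

lemma mset_Lpast {L : Fin K → Ω → 𝓛} (hL : ∀ k, Measurable (L k)) (t : ℕ)
    (l : Fin K → 𝓛) : MeasurableSet (Lpast L t l) := by
  have h : Lpast L t l = ⋂ k : Fin K, {ω | (k : ℕ) ≤ t → L k ω = l k} := by
    ext ω; simp [Lpast, Set.mem_iInter]
  rw [h]
  refine MeasurableSet.iInter fun k => ?_
  by_cases hk : (k : ℕ) ≤ t
  · have : {ω : Ω | (k : ℕ) ≤ t → L k ω = l k} = L k ⁻¹' {l k} := by ext ω; simp [hk]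
    rw [this]; exact hL k (measurableSet_singleton _)
  · have : {ω : Ω | (k : ℕ) ≤ t → L k ω = l k} = Set.univ := by ext ω; simp [hk]
    rw [this]; exact MeasurableSet.univ

lemma Apast_zero (A : Fin K → Ω → Bool) (b : Fin K → Bool) : Apast A 0 b = Set.univ := by
  ext ω; simp [Apast]

lemma Apast_succ (A : Fin K → Ω → Bool) {t : ℕ} (ht : t < K) (e : Fin K → Bool) :
    Apast A (t + 1) e = Apast A t e ∩ {ω | A ⟨t, ht⟩ ω = e ⟨t, ht⟩} := by
  ext ω
  simp only [Apast, Set.mem_setOf_eq, Set.mem_inter_iff]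
  constructor
  · intro h
    exact ⟨fun k hk => h k (by omega), h ⟨t, ht⟩ (by simp)⟩
  · rintro ⟨h1, h2⟩ k hk
    by_cases hkt : (k : ℕ) < t
    · exact h1 k hkt
    · have hk' : k = ⟨t, ht⟩ := Fin.ext (by simpa using (by omega : (k : ℕ) = t))
      rw [hk']; exact h2

lemma Lpast_set_eq (L : Fin K → Ω → 𝓛) {t : ℕ} {ω : Ω} {l : Fin K → 𝓛}
    (hω : ω ∈ Lpast L t l) {k : ℕ} (hk : k ≤ t) :
    Lpast L k (fun j => L j ω) = Lpast L k l := by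
  ext ω'
  simp only [Lpast, Set.mem_setOf_eq]
  constructor <;> intro h j hj
  · rw [h j hj, hω j (hj.trans hk)]
  · rw [h j hj, ← hω j (hj.trans hk)]

/-! ### Conditional probability basics -/

lemma cP_nonneg (P : Measure Ω) (E F : Set Ω) : 0 ≤ cP P E F :=
  div_nonneg ENNReal.toReal_nonneg ENNReal.toReal_nonneg

lemma cP_mul_toReal (P : Measure Ω) [IsProbabilityMeasure P] (E F : Set Ω) (hF : P F ≠ 0) :
    cP P E F * (P F).toReal = (P (E ∩ F)).toReal := by
  have h : (P F).toReal ≠ 0 := ENNReal.toReal_ne_zero.mpr ⟨hF, measure_ne_top P F⟩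
  rw [cP, div_mul_cancel₀ _ h]

/-! ### The index sets and basic product bookkeeping -/

/-- The indices `k` with `s ≤ k < t`. -/
def Sfil (K s t : ℕ) : Finset (Fin K) :=
  Finset.univ.filter fun k => s ≤ (k : ℕ) ∧ (k : ℕ) < t

lemma Sfil_self (K s : ℕ) : Sfil K s s = ∅ := by
  rw [Sfil, Finset.filter_eq_empty_iff]; intro k _; omega

lemma Sfil_succ {K s t : ℕ} (ht : t < K) (hst : s ≤ t) :
    Sfil K s (t + 1) = insert ⟨t, ht⟩ (Sfil K s t) := by
  ext k
  simp only [Sfil, Finset.mem_filter, Finset.mem_univ, true_and, Finset.mem_insert,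
    Fin.ext_iff]
  omega

lemma not_mem_Sfil {K s t : ℕ} (ht : t < K) : (⟨t, ht⟩ : Fin K) ∉ Sfil K s t := by
  simp [Sfil]

lemma Sfil_top (K s : ℕ) :
    Sfil K s K = Finset.univ.filter fun k : Fin K => s ≤ (k : ℕ) := by
  ext k
  simp only [Sfil, Finset.mem_filter, Finset.mem_univ, true_and, and_iff_left_iff_imp]
  exact fun _ => k.isLt

lemma Sfil_zero_top (K : ℕ) : Sfil K 0 K = Finset.univ := by
  ext k
  simp only [Sfil, Finset.mem_filter, Finset.mem_univ, true_and, iff_true]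
  exact ⟨Nat.zero_le _, k.isLt⟩

/-! ### The treatment propensities -/

/-- `P(A(k) = e(k) | Ā(k−1) = ē(k−1))`. -/
def pk (P : Measure Ω) (A : Fin K → Ω → Bool) (e : Fin K → Bool) (k : Fin K) : ℝ :=
  cP P {ω' | A k ω' = e k} (Apast A (k : ℕ) e)

/-- `P(A(k) = e(k) | L̄(k) = l̄(k), Ā(k−1) = ē(k−1))`. -/
def pik (P : Measure Ω) (A : Fin K → Ω → Bool) (L : Fin K → Ω → 𝓛) (e : Fin K → Bool)
    (l : Fin K → 𝓛) (k : Fin K) : ℝ :=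
  cP P {ω' | A k ω' = e k} (Lpast L (k : ℕ) l ∩ Apast A (k : ℕ) e)

/-- The stabilized-weight factor at time `k`, for target treatment history `e`. -/
def rat (P : Measure Ω) (A : Fin K → Ω → Bool) (L : Fin K → Ω → 𝓛) (e : Fin K → Bool)
    (k : Fin K) : Ω → ℝ :=
  fun ω => pk P A e k / pik P A L e (fun j => L j ω) k

lemma pk_mul (P : Measure Ω) [IsProbabilityMeasure P] (A : Fin K → Ω → Bool)
    (e : Fin K → Bool) {t : ℕ} (ht : t < K) :
    pk P A e ⟨t, ht⟩ * (P (Apast A t e)).toReal = (P (Apast A (t + 1) e)).toReal := by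
  by_cases h0 : P (Apast A t e) = 0
  · have h1 : P (Apast A (t + 1) e) = 0 := by
      refine measure_mono_null ?_ h0
      rw [Apast_succ A ht e]; exact Set.inter_subset_left
    rw [h0, h1]; simp
  · rw [Apast_succ A ht e, Set.inter_comm]
    exact cP_mul_toReal P _ _ h0

/-- Telescoping: the product of the `pk`'s between `s` and `t` transports
`P(Ā(s−1) = ē)` to `P(Ā(t−1) = ē)`. -/
lemma tel (P : Measure Ω) [IsProbabilityMeasure P] (A : Fin K → Ω → Bool)
    (e : Fin K → Bool) (s : ℕ) :
    ∀ t, s ≤ t → t ≤ K →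
      (∏ k ∈ Sfil K s t, pk P A e k) * (P (Apast A s e)).toReal =
        (P (Apast A t e)).toReal := by
  intro t hst
  induction t, hst using Nat.le_induction with
  | base => intro _; rw [Sfil_self]; simp
  | succ t hst IH =>
      intro ht1
      have htK : t < K := ht1
      rw [Sfil_succ htK hst, Finset.prod_insert (not_mem_Sfil htK), mul_assoc,
        IH (le_of_lt htK), pk_mul P A e htK]

/-! ### Pushforward comparison lemma -/

lemma setIntegral_eq_mul (P : Measure Ω) {f : Ω → ℝ} (hf : Measurable f) {S T : Set Ω}
    {c : ℝ} (hc : 0 ≤ c)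
    (h : ∀ B : Set ℝ, MeasurableSet B → P (f ⁻¹' B ∩ S) = ENNReal.ofReal c * P (f ⁻¹' B ∩ T)) :
    ∫ ω in S, f ω ∂P = c * ∫ ω in T, f ω ∂P := by
  have hmap : Measure.map f (P.restrict S) = ENNReal.ofReal c • Measure.map f (P.restrict T) := by
    ext B hB
    rw [Measure.map_apply hf hB, Measure.smul_apply, Measure.map_apply hf hB,
      Measure.restrict_apply (hf hB), Measure.restrict_apply (hf hB), h B hB, smul_eq_mul]
  calc ∫ ω in S, f ω ∂P
      = ∫ x, x ∂(Measure.map f (P.restrict S)) :=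
        (integral_map (f := fun x : ℝ => x) hf.aemeasurable aestronglyMeasurable_id).symm
    _ = ∫ x, x ∂(ENNReal.ofReal c • Measure.map f (P.restrict T)) := by rw [hmap]
    _ = c * ∫ ω in T, f ω ∂P := by
        rw [integral_smul_measure, integral_map (f := fun x : ℝ => x) hf.aemeasurable aestronglyMeasurable_id,
          ENNReal.toReal_ofReal hc, smul_eq_mul]

lemma setIntegral_null (P : Measure Ω) {S : Set Ω} (h : P S = 0) (f : Ω → ℝ) :
    ∫ ω in S, f ω ∂P = 0 := by
  rw [Measure.restrict_eq_zero.mpr h]; exact integral_zero_measure f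

/-! ### Integral forms of (A2) and (A7) -/

/-- Integral form of sequential exchangeability: conditionally on the history,
the mean of a potential outcome is unchanged by further conditioning on `A(t)`. -/
lemma stepA_pot (P : Measure Ω) [IsProbabilityMeasure P] {A : Fin K → Ω → Bool}
    {L : Fin K → Ω → 𝓛} {Ypot : (Fin K → Bool) → Ω → ℝ}
    (hYpm : ∀ a, Measurable (Ypot a)) (hA2 : A2ok P A L Ypot)
    (a e : Fin K → Bool) (t : Fin K) (l : Fin K → 𝓛) :
    ∫ ω in (Lpast L (t : ℕ) l ∩ Apast A (t : ℕ) e) ∩ {ω | A t ω = e t}, Ypot a ω ∂P =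
      cP P {ω | A t ω = e t} (Lpast L (t : ℕ) l ∩ Apast A (t : ℕ) e) *
        ∫ ω in Lpast L (t : ℕ) l ∩ Apast A (t : ℕ) e, Ypot a ω ∂P := by
  set H := Lpast L (t : ℕ) l ∩ Apast A (t : ℕ) e with hH
  by_cases h0 : P H = 0
  · have h1 : P (H ∩ {ω | A t ω = e t}) = 0 := measure_mono_null Set.inter_subset_left h0
    rw [setIntegral_null P h1, setIntegral_null P h0, mul_zero]
  · have hHne : (P H).toReal ≠ 0 := ENNReal.toReal_ne_zero.mpr ⟨h0, measure_ne_top P H⟩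
    refine setIntegral_eq_mul P (hYpm a) (cP_nonneg P _ _) ?_
    intro B hB
    have h2 := hA2 t a B hB (e t) l e (by
      rw [pos_iff_ne_zero]; exact h0)
    have h2' : (P (({ω | Ypot a ω ∈ B} ∩ {ω | A t ω = e t}) ∩ H)).toReal / (P H).toReal =
        (P ({ω | Ypot a ω ∈ B} ∩ H)).toReal / (P H).toReal *
          cP P {ω | A t ω = e t} H := h2
    have hxr : (P (({ω | Ypot a ω ∈ B} ∩ {ω | A t ω = e t}) ∩ H)).toReal =
        cP P {ω | A t ω = e t} H * (P ({ω | Ypot a ω ∈ B} ∩ H)).toReal := by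
      rw [div_eq_iff hHne] at h2'
      rw [h2']; field_simp
    have hx : Ypot a ⁻¹' B ∩ (H ∩ {ω | A t ω = e t}) =
        ({ω | Ypot a ω ∈ B} ∩ {ω | A t ω = e t}) ∩ H := by
      ext ω
      simp only [Set.mem_inter_iff, Set.mem_preimage, Set.mem_setOf_eq]
      tauto
    have hy : Ypot a ⁻¹' B ∩ H = {ω | Ypot a ω ∈ B} ∩ H := rfl
    rw [hx, hy]
    calc P (({ω | Ypot a ω ∈ B} ∩ {ω | A t ω = e t}) ∩ H)
        = ENNReal.ofReal ((P (({ω | Ypot a ω ∈ B} ∩ {ω | A t ω = e t}) ∩ H)).toReal) :=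
          (ENNReal.ofReal_toReal (measure_ne_top _ _)).symm
      _ = ENNReal.ofReal (cP P {ω | A t ω = e t} H * (P ({ω | Ypot a ω ∈ B} ∩ H)).toReal) := by
          rw [hxr]
      _ = ENNReal.ofReal (cP P {ω | A t ω = e t} H) *
            ENNReal.ofReal ((P ({ω | Ypot a ω ∈ B} ∩ H)).toReal) :=
          ENNReal.ofReal_mul (cP_nonneg P _ _)
      _ = ENNReal.ofReal (cP P {ω | A t ω = e t} H) * P ({ω | Ypot a ω ∈ B} ∩ H) := by
          rw [ENNReal.ofReal_toReal (measure_ne_top _ _)]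

/-- Trivial analogue of `stepA_pot` for the constant function `1`. -/
lemma stepA_one (P : Measure Ω) [IsProbabilityMeasure P] {A : Fin K → Ω → Bool}
    {L : Fin K → Ω → 𝓛} (e : Fin K → Bool) (t : Fin K) (l : Fin K → 𝓛) :
    ∫ ω in (Lpast L (t : ℕ) l ∩ Apast A (t : ℕ) e) ∩ {ω | A t ω = e t}, (1 : ℝ) ∂P =
      cP P {ω | A t ω = e t} (Lpast L (t : ℕ) l ∩ Apast A (t : ℕ) e) *
        ∫ ω in Lpast L (t : ℕ) l ∩ Apast A (t : ℕ) e, (1 : ℝ) ∂P := by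
  set H := Lpast L (t : ℕ) l ∩ Apast A (t : ℕ) e with hHdef
  rw [setIntegral_const, setIntegral_const]
  simp only [smul_eq_mul, mul_one]
  by_cases h0 : P H = 0
  · have h1 : P (H ∩ {ω | A t ω = e t}) = 0 := measure_mono_null Set.inter_subset_left h0
    rw [measureReal_def, measureReal_def, h0, h1]; simp
  · have hHne : (P H).toReal ≠ 0 := ENNReal.toReal_ne_zero.mpr ⟨h0, measure_ne_top P H⟩
    rw [cP, measureReal_def, measureReal_def, div_mul_cancel₀ _ hHne, Set.inter_comm]

/-- Integral form of (A7). -/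
lemma a7int (P : Measure Ω) [IsProbabilityMeasure P] {A : Fin K → Ω → Bool} {m : ℕ}
    {Ypot : (Fin K → Bool) → Ω → ℝ} (hYpm : ∀ a, Measurable (Ypot a))
    (hA7 : ∀ (a : Fin K → Bool) (B : Set ℝ), MeasurableSet B → ∀ b : Fin K → Bool,
      P ({ω | Ypot a ω ∈ B} ∩ Apast A (K - m) b) =
        P {ω | Ypot a ω ∈ B} * P (Apast A (K - m) b))
    (e : Fin K → Bool) :
    ∫ ω in Apast A (K - m) e, Ypot e ω ∂P =
      (P (Apast A (K - m) e)).toReal * ∫ ω, Ypot e ω ∂P := by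
  have h := setIntegral_eq_mul P (hYpm e) (S := Apast A (K - m) e)
    (c := (P (Apast A (K - m) e)).toReal)
    ENNReal.toReal_nonneg (T := Set.univ) ?_
  · rw [h, setIntegral_univ]
  · intro B hB
    rw [Set.inter_univ, ENNReal.ofReal_toReal (measure_ne_top _ _)]
    have := hA7 e B hB e
    rw [show Ypot e ⁻¹' B = {ω | Ypot e ω ∈ B} from rfl, this, mul_comm]

/-! ### Partition by covariate histories -/

/-- Canonical representatives of covariate histories up to time `t`. -/
def Lcan (𝓛 : Type*) [Fintype 𝓛] [Nonempty 𝓛] (K t : ℕ) : Finset (Fin K → 𝓛) :=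
  Finset.univ.filter fun l => ∀ k : Fin K, t < (k : ℕ) → l k = Classical.ofNonempty

lemma Lcan_exists (L : Fin K → Ω → 𝓛) (t : ℕ) (ω : Ω) :
    ∃ l ∈ Lcan 𝓛 K t, ω ∈ Lpast L t l := by
  refine ⟨fun k => if (k : ℕ) ≤ t then L k ω else Classical.ofNonempty, ?_, ?_⟩
  · simp only [Lcan, Finset.mem_filter, Finset.mem_univ, true_and]
    intro k hk; rw [if_neg (by omega)]
  · intro k hk; simp only []; rw [if_pos hk]

lemma Lpast_disjoint (L : Fin K → Ω → 𝓛) (t : ℕ) {l l' : Fin K → 𝓛}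
    (hl : l ∈ Lcan 𝓛 K t) (hl' : l' ∈ Lcan 𝓛 K t) (hne : l ≠ l') :
    Disjoint (Lpast L t l) (Lpast L t l') := by
  rw [Set.disjoint_left]
  intro ω h1 h2
  apply hne
  funext k
  by_cases hk : (k : ℕ) ≤ t
  · rw [← h1 k hk, h2 k hk]
  · simp only [Lcan, Finset.mem_filter, Finset.mem_univ, true_and] at hl hl'
    rw [hl k (by omega), hl' k (by omega)]

lemma partition_int (L : Fin K → Ω → 𝓛) (t : ℕ) (X : Set Ω) :
    X = ⋃ l ∈ Lcan 𝓛 K t, (Lpast L t l ∩ X) := by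
  ext ω
  simp only [Set.mem_iUnion, Set.mem_inter_iff, exists_prop]
  constructor
  · intro h
    obtain ⟨l, hl, hm⟩ := Lcan_exists L t ω
    exact ⟨l, hl, hm, h⟩
  · rintro ⟨l, _, _, h⟩; exact h

/-! ### Measurability and boundedness of the weight products -/

instance : MeasurableSingletonClass (Fin K → 𝓛) := by
  refine ⟨fun l => ?_⟩
  have h : {l} = ⋂ k : Fin K, (fun g : Fin K → 𝓛 => g k) ⁻¹' {l k} := by
    ext g; simp [funext_iff]
  rw [h]
  exact MeasurableSet.iInter fun k => (measurable_pi_apply k) (measurableSet_singleton _)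

lemma ratprod_meas (P : Measure Ω) (A : Fin K → Ω → Bool) {L : Fin K → Ω → 𝓛}
    (hL : ∀ k, Measurable (L k)) (e : Fin K → Bool) (S : Finset (Fin K)) :
    Measurable (fun ω => ∏ k ∈ S, rat P A L e k ω) := by
  have hLvec : Measurable (fun ω => (fun j => L j ω : Fin K → 𝓛)) :=
    measurable_pi_lambda _ hL
  have hG : Measurable (fun l : Fin K → 𝓛 => ∏ k ∈ S, pk P A e k / pik P A L e l k) :=
    measurable_of_countable _
  exact hG.comp hLvec

lemma ratprod_bdd (P : Measure Ω) (A : Fin K → Ω → Bool) (L : Fin K → Ω → 𝓛)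
    (e : Fin K → Bool) (S : Finset (Fin K)) :
    ∃ C, ∀ ω, ‖∏ k ∈ S, rat P A L e k ω‖ ≤ C := by
  refine ⟨Finset.univ.sup' Finset.univ_nonempty
    (fun l : Fin K → 𝓛 => ‖∏ k ∈ S, pk P A e k / pik P A L e l k‖), fun ω => ?_⟩
  exact Finset.le_sup' (f := fun l : Fin K → 𝓛 => ‖∏ k ∈ S, pk P A e k / pik P A L e l k‖)
    (Finset.mem_univ fun j => L j ω)

lemma ratprod_int (P : Measure Ω) (A : Fin K → Ω → Bool) {L : Fin K → Ω → 𝓛}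
    (hL : ∀ k, Measurable (L k)) (e : Fin K → Bool) (S : Finset (Fin K))
    {Z : Ω → ℝ} (hZ : Integrable Z P) :
    Integrable (fun ω => (∏ k ∈ S, rat P A L e k ω) * Z ω) P :=
  (ratprod_bdd P A L e S).elim fun _ hC =>
    hZ.bdd_mul (ratprod_meas P A hL e S).aestronglyMeasurable (ae_of_all _ hC)

/-! ### The inductive peeling step -/

lemma STEP (P : Measure Ω) [IsProbabilityMeasure P] {A : Fin K → Ω → Bool}
    {L : Fin K → Ω → 𝓛} (hA : ∀ k, Measurable (A k)) (hL : ∀ k, Measurable (L k))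
    (hA3 : A3ok P A L) (e : Fin K → Bool) {Z : Ω → ℝ} (hZ : Integrable Z P)
    (HZ : ∀ (t : Fin K) (l : Fin K → 𝓛),
      ∫ ω in (Lpast L (t : ℕ) l ∩ Apast A (t : ℕ) e) ∩ {ω | A t ω = e t}, Z ω ∂P =
        cP P {ω | A t ω = e t} (Lpast L (t : ℕ) l ∩ Apast A (t : ℕ) e) *
          ∫ ω in Lpast L (t : ℕ) l ∩ Apast A (t : ℕ) e, Z ω ∂P)
    (s t : ℕ) (hst : s ≤ t) (htK : t < K) :
    ∫ ω in Apast A (t + 1) e, (∏ k ∈ Sfil K s (t + 1), rat P A L e k ω) * Z ω ∂P =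
      pk P A e ⟨t, htK⟩ *
        ∫ ω in Apast A t e, (∏ k ∈ Sfil K s t, rat P A L e k ω) * Z ω ∂P := by
  set tF : Fin K := ⟨t, htK⟩ with htF
  have htFv : (tF : ℕ) = t := rfl
  -- measurability of the pieces
  have hmH : ∀ l : Fin K → 𝓛, MeasurableSet (Lpast L t l ∩ Apast A t e) := fun l =>
    (mset_Lpast hL t l).inter (mset_Apast hA t e)
  have hmHt : ∀ l : Fin K → 𝓛,
      MeasurableSet ((Lpast L t l ∩ Apast A t e) ∩ {ω | A tF ω = e tF}) := fun l =>
    (hmH l).inter (mset_Aeq hA tF (e tF))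
  -- pairwise disjointness of the pieces
  have hdisj : ∀ (X : Set Ω), Set.Pairwise (↑(Lcan 𝓛 K t))
      (Function.onFun Disjoint fun l => Lpast L t l ∩ X) := by
    intro X l hl l' hl' hne
    exact Set.disjoint_of_subset Set.inter_subset_left Set.inter_subset_left
      (Lpast_disjoint L t hl hl' hne)
  -- integrability
  have hint : ∀ (S : Finset (Fin K)) (X : Set Ω),
      IntegrableOn (fun ω => (∏ k ∈ S, rat P A L e k ω) * Z ω) X P :=
    fun S X => (ratprod_int P A hL e S hZ).integrableOn
  -- decomposition of the LHS region
  have hsucc : Apast A (t + 1) e = Apast A t e ∩ {ω | A tF ω = e tF} := Apast_succ A htK e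
  have hdec1 : Apast A (t + 1) e =
      ⋃ l ∈ Lcan 𝓛 K t, ((Lpast L t l ∩ Apast A t e) ∩ {ω | A tF ω = e tF}) := by
    rw [hsucc, partition_int L t (Apast A t e ∩ {ω | A tF ω = e tF})]
    refine Set.iUnion₂_congr fun l _ => ?_
    rw [Set.inter_assoc]
  have hdec0 : Apast A t e = ⋃ l ∈ Lcan 𝓛 K t, (Lpast L t l ∩ Apast A t e) :=
    partition_int L t (Apast A t e)
  -- expand both sides into sums over covariate histories
  rw [hdec1, integral_biUnion_finset (Lcan 𝓛 K t) (fun l _ => hmHt l)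
    (by
      intro l hl l' hl' hne
      exact Set.disjoint_of_subset (Set.inter_subset_left.trans Set.inter_subset_left)
        (Set.inter_subset_left.trans Set.inter_subset_left)
        (Lpast_disjoint L t hl hl' hne))
    (fun l _ => hint _ _)]
  conv_rhs => rw [hdec0, integral_biUnion_finset (Lcan 𝓛 K t) (fun l _ => hmH l)
    (hdisj (Apast A t e)) (fun l _ => hint _ _)]
  rw [Finset.mul_sum]
  refine Finset.sum_congr rfl fun l hl => ?_
  -- on each piece, the weights are constant
  have hconst : ∀ (S : Finset (Fin K)), (∀ k ∈ S, (k : ℕ) ≤ t) →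
      ∀ X : Set Ω, X ⊆ Lpast L t l →
      Set.EqOn (fun ω => (∏ k ∈ S, rat P A L e k ω) * Z ω)
        (fun ω => (∏ k ∈ S, pk P A e k / pik P A L e l k) * Z ω) X := by
    intro S hS X hX ω hω
    simp only
    congr 1
    refine Finset.prod_congr rfl fun k hk => ?_
    rw [rat, pik, pik, Lpast_set_eq L (hX hω) (hS k hk)]
  -- LHS piece
  have hLle : ∀ k ∈ Sfil K s (t + 1), (k : ℕ) ≤ t := by
    intro k hk
    simp only [Sfil, Finset.mem_filter] at hk
    omega
  have hRle : ∀ k ∈ Sfil K s t, (k : ℕ) ≤ t := by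
    intro k hk
    simp only [Sfil, Finset.mem_filter] at hk
    omega
  rw [setIntegral_congr_fun (hmHt l)
    (hconst _ hLle _ (Set.inter_subset_left.trans Set.inter_subset_left)),
    setIntegral_congr_fun (hmH l) (hconst _ hRle _ Set.inter_subset_left),
    integral_const_mul, integral_const_mul, HZ tF l]
  -- now pure algebra, with a case distinction on nullity of the history event
  by_cases h0 : P (Lpast L t l ∩ Apast A t e) = 0
  · rw [setIntegral_null P h0]
    ring
  · have hpos : 0 < pik P A L e l tF := hA3 tF (e tF) l e (by rwa [pos_iff_ne_zero])
    rw [Sfil_succ htK hst, Finset.prod_insert (not_mem_Sfil htK)]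
    have : cP P {ω | A tF ω = e tF} (Lpast L (tF : ℕ) l ∩ Apast A (tF : ℕ) e) =
        pik P A L e l tF := rfl
    rw [this]
    have hne : pik P A L e l tF ≠ 0 := ne_of_gt hpos
    field_simp
    linear_combination ((pk P A e ⟨t, htK⟩ * ∏ x ∈ Sfil K s t, pk P A e x / pik P A L e l x) *
      (∫ ω in Lpast L t l ∩ Apast A t e, Z ω ∂P)) * mul_inv_cancel₀ hne

/-! ### The main identification lemma -/

lemma MAIN (P : Measure Ω) [IsProbabilityMeasure P] {A : Fin K → Ω → Bool}
    {L : Fin K → Ω → 𝓛} (hA : ∀ k, Measurable (A k)) (hL : ∀ k, Measurable (L k))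
    (hA3 : A3ok P A L) (e : Fin K → Bool) {Z : Ω → ℝ} (hZ : Integrable Z P)
    (HZ : ∀ (t : Fin K) (l : Fin K → 𝓛),
      ∫ ω in (Lpast L (t : ℕ) l ∩ Apast A (t : ℕ) e) ∩ {ω | A t ω = e t}, Z ω ∂P =
        cP P {ω | A t ω = e t} (Lpast L (t : ℕ) l ∩ Apast A (t : ℕ) e) *
          ∫ ω in Lpast L (t : ℕ) l ∩ Apast A (t : ℕ) e, Z ω ∂P)
    (s : ℕ) :
    ∀ t, s ≤ t → t ≤ K →
      ∫ ω in Apast A t e, (∏ k ∈ Sfil K s t, rat P A L e k ω) * Z ω ∂P =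
        (∏ k ∈ Sfil K s t, pk P A e k) * ∫ ω in Apast A s e, Z ω ∂P := by
  intro t hst
  induction t, hst using Nat.le_induction with
  | base =>
      intro _
      rw [Sfil_self]
      simp
  | succ t hst IH =>
      intro ht1
      have htK : t < K := ht1
      rw [STEP P hA hL hA3 e hZ HZ s t hst htK, IH (le_of_lt htK),
        Sfil_succ htK hst, Finset.prod_insert (not_mem_Sfil htK), mul_assoc]

/-! ### Decomposition of the treatment events and weight matching -/

/-- Full treatment histories compatible with `A̲(K−m) = a_m`. -/
def Efin (K m : ℕ) (a : Bool) : Finset (Fin K → Bool) :=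
  Finset.univ.filter fun e => ∀ k : Fin K, K - m ≤ (k : ℕ) → e k = a

lemma Etr_eq_biUnion (A : Fin K → Ω → Bool) (m : ℕ) (a : Bool) :
    Etr A m a = ⋃ e ∈ Efin K m a, Apast A K e := by
  ext ω
  simp only [Etr, EtrV, Set.mem_setOf_eq, Set.mem_iUnion, exists_prop]
  constructor
  · intro h
    refine ⟨fun k => A k ω, ?_, ?_⟩
    · simp only [Efin, Finset.mem_filter, Finset.mem_univ, true_and]
      exact h
    · intro k _; rfl
  · rintro ⟨e, he, hω⟩ k hk
    simp only [Efin, Finset.mem_filter, Finset.mem_univ, true_and] at he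
    rw [hω k k.isLt, he k hk]

lemma Apast_full_disjoint (A : Fin K → Ω → Bool) {e e' : Fin K → Bool} (hne : e ≠ e') :
    Disjoint (Apast A K e) (Apast A K e') := by
  rw [Set.disjoint_left]
  intro ω h1 h2
  exact hne (funext fun k => by rw [← h1 k k.isLt, h2 k k.isLt])

lemma Avec_eq (A : Fin K → Ω → Bool) (e : Fin K → Bool) {ω : Ω}
    (hω : ω ∈ Apast A K e) : (fun j => A j ω) = e :=
  funext fun k => hω k k.isLt

lemma Wpsw_match (P : Measure Ω) (A : Fin K → Ω → Bool) (L : Fin K → Ω → 𝓛) (m : ℕ)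
    (e : Fin K → Bool) {ω : Ω} (hω : ω ∈ Apast A K e) :
    Wpsw P A L m ω = ∏ k ∈ Sfil K (K - m) K, rat P A L e k ω := by
  rw [Sfil_top, Wpsw]
  refine Finset.prod_congr rfl fun k _ => ?_
  rw [rat, pk, pik]
  simp only [Avec_eq A e hω, hω k k.isLt]

lemma Wsw_match (P : Measure Ω) (A : Fin K → Ω → Bool) (L : Fin K → Ω → 𝓛)
    (e : Fin K → Bool) {ω : Ω} (hω : ω ∈ Apast A K e) :
    Wsw P A L ω = ∏ k ∈ Sfil K 0 K, rat P A L e k ω := by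
  rw [Sfil_zero_top, Wsw]
  refine Finset.prod_congr rfl fun k _ => ?_
  rw [rat, pk, pik]
  simp only [Avec_eq A e hω, hω k k.isLt]

/-! ### The common value of the weighted integrals -/

lemma weighted_integral_eq (P : Measure Ω) [IsProbabilityMeasure P]
    {A : Fin K → Ω → Bool} {L : Fin K → Ω → 𝓛}
    (hA : ∀ k, Measurable (A k)) (hL : ∀ k, Measurable (L k))
    {Y : Ω → ℝ} {Ypot : (Fin K → Bool) → Ω → ℝ}
    (hYpm : ∀ a, Measurable (Ypot a)) (hYpi : ∀ a, Integrable (Ypot a) P)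
    (hA1 : A1ok A Y Ypot) (hA2 : A2ok P A L Ypot) (hA3 : A3ok P A L)
    (m : ℕ) (hmK : m ≤ K)
    (hA7 : ∀ (a : Fin K → Bool) (B : Set ℝ), MeasurableSet B → ∀ b : Fin K → Bool,
      P ({ω | Ypot a ω ∈ B} ∩ Apast A (K - m) b) =
        P {ω | Ypot a ω ∈ B} * P (Apast A (K - m) b)) (a : Bool) :
    (∫ ω in Etr A m a, Wpsw P A L m ω * Y ω ∂P =
        ∑ e ∈ Efin K m a, (P (Apast A K e)).toReal * ∫ ω, Ypot e ω ∂P) ∧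
      (∫ ω in Etr A m a, Wsw P A L ω * Y ω ∂P =
        ∑ e ∈ Efin K m a, (P (Apast A K e)).toReal * ∫ ω, Ypot e ω ∂P) ∧
      (∫ ω in Etr A m a, Wpsw P A L m ω ∂P =
        ∑ e ∈ Efin K m a, (P (Apast A K e)).toReal) ∧
      (∫ ω in Etr A m a, Wsw P A L ω ∂P =
        ∑ e ∈ Efin K m a, (P (Apast A K e)).toReal) := by
  have hmA : ∀ e, MeasurableSet (Apast A K e) := fun e => mset_Apast hA K e
  have hdisj : Set.Pairwise (↑(Efin K m a)) (Function.onFun Disjoint fun e => Apast A K e) :=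
    fun e _ e' _ hne => Apast_full_disjoint A hne
  have hY_eq : ∀ e : Fin K → Bool, ∀ ω ∈ Apast A K e, Y ω = Ypot e ω :=
    fun e ω hω => hA1 e ω fun k => hω k k.isLt
  -- the main per-history computation, for arbitrary weight-start `s` and weight `W`
  have key : ∀ (s : ℕ), s ≤ K → ∀ (W : Ω → ℝ),
      (∀ e : Fin K → Bool, ∀ ω ∈ Apast A K e, W ω = ∏ k ∈ Sfil K s K, rat P A L e k ω) →
      (∫ ω in Etr A m a, W ω * Y ω ∂P =
          ∑ e ∈ Efin K m a, (∏ k ∈ Sfil K s K, pk P A e k) *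
            ∫ ω in Apast A s e, Ypot e ω ∂P) ∧
        (∫ ω in Etr A m a, W ω ∂P =
          ∑ e ∈ Efin K m a, (∏ k ∈ Sfil K s K, pk P A e k) *
            ∫ ω in Apast A s e, (1 : ℝ) ∂P) := by
    intro s hsK W hW
    constructor
    · rw [Etr_eq_biUnion A m a,
        integral_biUnion_finset (Efin K m a) (fun e _ => hmA e) hdisj (fun e _ => by
          refine ((ratprod_int P A hL e (Sfil K s K) (hYpi e)).integrableOn).congr_fun ?_ (hmA e)
          intro ω hω
          simp only
          rw [hW e ω hω, hY_eq e ω hω])]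
      refine Finset.sum_congr rfl fun e _ => ?_
      rw [setIntegral_congr_fun (hmA e) (g := fun ω => (∏ k ∈ Sfil K s K, rat P A L e k ω) *
        Ypot e ω) (fun ω hω => by simp only; rw [hW e ω hω, hY_eq e ω hω])]
      exact MAIN P hA hL hA3 e (hYpi e)
        (fun t l => stepA_pot P hYpm hA2 e e t l) s K hsK (le_refl K)
    · rw [Etr_eq_biUnion A m a,
        integral_biUnion_finset (Efin K m a) (fun e _ => hmA e) hdisj (fun e _ => by
          refine ((ratprod_int P A hL e (Sfil K s K)
            (integrable_const (1 : ℝ))).integrableOn).congr_fun ?_ (hmA e)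
          intro ω hω
          simp only
          rw [hW e ω hω, mul_one])]
      refine Finset.sum_congr rfl fun e _ => ?_
      rw [setIntegral_congr_fun (hmA e) (g := fun ω => (∏ k ∈ Sfil K s K, rat P A L e k ω) *
        (1 : ℝ)) (fun ω hω => by simp only; rw [hW e ω hω, mul_one])]
      exact MAIN P hA hL hA3 e (integrable_const (1 : ℝ))
        (fun t l => stepA_one P e t l) s K hsK (le_refl K)
  obtain ⟨hpswY, hpsw1⟩ := key (K - m) (Nat.sub_le K m) (Wpsw P A L m)
    (fun e ω hω => Wpsw_match P A L m e hω)
  obtain ⟨hswY, hsw1⟩ := key 0 (Nat.zero_le K) (Wsw P A L)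
    (fun e ω hω => Wsw_match P A L e hω)
  refine ⟨?_, ?_, ?_, ?_⟩
  · rw [hpswY]
    refine Finset.sum_congr rfl fun e _ => ?_
    rw [a7int P hYpm hA7 e, ← mul_assoc, tel P A e (K - m) K (Nat.sub_le K m) (le_refl K)]
  · rw [hswY]
    refine Finset.sum_congr rfl fun e _ => ?_
    have h0 : ∫ ω in Apast A 0 e, Ypot e ω ∂P = ∫ ω, Ypot e ω ∂P := by
      rw [Apast_zero, setIntegral_univ]
    rw [h0, ← mul_one (∏ k ∈ Sfil K 0 K, pk P A e k), mul_assoc, one_mul]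
    have h1 : (∏ k ∈ Sfil K 0 K, pk P A e k) = (P (Apast A K e)).toReal := by
      have := tel P A e 0 K (Nat.zero_le K) (le_refl K)
      rwa [Apast_zero, measure_univ, ENNReal.toReal_one, mul_one] at this
    rw [h1]
  · rw [hpsw1]
    refine Finset.sum_congr rfl fun e _ => ?_
    rw [setIntegral_const, smul_eq_mul, mul_one, measureReal_def,
      tel P A e (K - m) K (Nat.sub_le K m) (le_refl K)]
  · rw [hsw1]
    refine Finset.sum_congr rfl fun e _ => ?_
    rw [setIntegral_const, smul_eq_mul, mul_one, measureReal_def,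
      tel P A e 0 K (Nat.zero_le K) (le_refl K)]

end Aux

/-- Theorem 4 of the paper: under (A1)–(A3) and (A7), `θ_psw^(m) = θ_sw^(m)`. -/
theorem theorem4
    {Ω : Type*} [MeasurableSpace Ω] {𝓛 : Type*} [MeasurableSpace 𝓛]
    [Fintype 𝓛] [Nonempty 𝓛] [MeasurableSingletonClass 𝓛]
    (P : Measure Ω) [IsProbabilityMeasure P]
    {K m : ℕ} (hK : 1 ≤ K) (hm1 : 1 ≤ m) (hmK : m ≤ K)
    (A : Fin K → Ω → Bool) (L : Fin K → Ω → 𝓛)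
    (hA : ∀ k, Measurable (A k)) (hL : ∀ k, Measurable (L k))
    (Y : Ω → ℝ) (hY : Measurable Y)
    (Ypot : (Fin K → Bool) → Ω → ℝ)
    (hYpm : ∀ a, Measurable (Ypot a)) (hYpi : ∀ a, Integrable (Ypot a) P)
    (hpos1 : 0 < P (Etr A m true)) (hpos0 : 0 < P (Etr A m false))
    (hA1 : A1ok A Y Ypot) (hA2 : A2ok P A L Ypot) (hA3 : A3ok P A L)
    -- (A7): `Y^{ā}` is independent of the past treatment history `Ā(K−m−1)`
    (hA7 : ∀ (a : Fin K → Bool) (B : Set ℝ), MeasurableSet B → ∀ b : Fin K → Bool,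
      P ({ω | Ypot a ω ∈ B} ∩ Apast A (K - m) b) =
        P {ω | Ypot a ω ∈ B} * P (Apast A (K - m) b)) :
    θW P A m (Wpsw P A L m) Y = θW P A m (Wsw P A L) Y := by
  obtain ⟨hpYt, hsYt, hp1t, hs1t⟩ :=
    weighted_integral_eq P hA hL hYpm hYpi hA1 hA2 hA3 m hmK hA7 true
  obtain ⟨hpYf, hsYf, hp1f, hs1f⟩ :=
    weighted_integral_eq P hA hL hYpm hYpi hA1 hA2 hA3 m hmK hA7 false
  rw [θW, θW, hpYt, hsYt, hp1t, hs1t, hpYf, hsYf, hp1f, hs1f]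

end MSMPaper
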